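/- arXiv:2201.01439 — 2 statements merged into one kernel-verified Lean document; each statement's English description precedes it below -/
import Mathlib

section
/- Let k ≥ 1 and let v, x, y ∈ (Z_{2k})^n satisfy wt_E(x) ≡ wt_E(y) ≡ 0 (mod 4k) and ⟨x,y⟩ = 0. Then wt_E(v + ⟨v,y⟩x − ⟨v,x⟩y) ≡ wt_E(v) (mod 4k). -/
open Finset

/-- Inner product of two vectors over `ZMod m`. -/
def dotP {m : ℕ} {ι : Type} [Fintype ι] (x y : ι → ZMod m) : ZMod m :=
  ∑ i, x i * y i

/-- A `ZMod m`-code (submodule) is self-dual if it equals its dual code. -/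
def IsSelfDual {m : ℕ} {ι : Type} [Fintype ι]
    (C : Submodule (ZMod m) (ι → ZMod m)) : Prop :=
  ∀ x, x ∈ C ↔ ∀ y ∈ C, dotP x y = 0

/-- The code of length `2n` with generator matrix `(I | M)`: the span of the
vectors `(e_i, M i)`. -/
def genCode (m : ℕ) {ι : Type} [Fintype ι] [DecidableEq ι] (M : ι → ι → ZMod m) :
    Submodule (ZMod m) (ι ⊕ ι → ZMod m) :=
  Submodule.span (ZMod m)
    {v | ∃ i : ι, v = Sum.elim (fun j => if j = i then 1 else 0) (M i)}

/-- The map `ρ : ZMod m → ℤ` sending the representative `i ∈ {0,…,m−1}` to `i`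
if `i ≤ m/2` and to `i − m` otherwise (for `m = 2k` this is the map of the paper). -/
def rho (m : ℕ) (a : ZMod m) : ℤ :=
  if a.val ≤ m / 2 then (a.val : ℤ) else (a.val : ℤ) - (m : ℤ)

/-- Euclidean weight of a vector over `ZMod m`. -/
def wtE {m : ℕ} {ι : Type} [Fintype ι] (v : ι → ZMod m) : ℤ :=
  ∑ i, (rho m (v i)) ^ 2

/-- A Type II `ZMod (2k)`-code: self-dual and all Euclidean weights divisible by `4k`. -/
def IsTypeII (k : ℕ) {ι : Type} [Fintype ι]
    (C : Submodule (ZMod (2 * k)) (ι → ZMod (2 * k))) : Prop :=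
  IsSelfDual C ∧ ∀ c ∈ C, (4 * (k : ℤ)) ∣ wtE c

/-- Equivalence of `ZMod m`-codes: a permutation of coordinates together with
sign changes. -/
def CodeEquiv {m n : ℕ} (C C' : Submodule (ZMod m) (Fin n → ZMod m)) : Prop :=
  ∃ (σ : Equiv.Perm (Fin n)) (ε : Fin n → ZMod m),
    (∀ i, ε i = 1 ∨ ε i = -1) ∧
    (C' : Set (Fin n → ZMod m)) =
      (fun c : Fin n → ZMod m => fun i => ε i * c (σ i)) '' (C : Set (Fin n → ZMod m))

/-- The binary part of a `ZMod m`-code. -/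
def binaryPart {m n : ℕ} (C : Submodule (ZMod m) (Fin n → ZMod m)) :
    Set (Fin n → ZMod 2) :=
  {b | ∃ c ∈ C, ∀ i, b i = ((rho m (c i) : ℤ) : ZMod 2)}

/-- Hamming weight of a binary vector. -/
def wtH {n : ℕ} (b : Fin n → ZMod 2) : ℕ :=
  (Finset.univ.filter fun i => b i ≠ 0).card

/-- The `n × n` negacirculant matrix with first row `r`. -/
def negacirc {m n : ℕ} (r : Fin n → ZMod m) : Fin n → Fin n → ZMod m :=
  fun i j =>
    if h : (i : ℕ) ≤ (j : ℕ) then r ⟨(j : ℕ) - (i : ℕ), by have hj := j.isLt; omega⟩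
    else -r ⟨n + (j : ℕ) - (i : ℕ), by have hi := i.isLt; have hj := j.isLt; omega⟩

/-- The block matrix `[[A, B], [−Bᵀ, Aᵀ]]`. -/
def fourBlock {m n : ℕ} (A B : Fin n → Fin n → ZMod m) :
    (Fin n ⊕ Fin n) → (Fin n ⊕ Fin n) → ZMod m
  | Sum.inl i, Sum.inl j => A i j
  | Sum.inl i, Sum.inr j => B i j
  | Sum.inr i, Sum.inl j => -B j i
  | Sum.inr i, Sum.inr j => A j i

/-- The Construction A lattice `A_m(C) = (1/√m)(ρ(C) + m ℤ^n)` as a subset of `ℝ^n`. -/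
noncomputable def constrA (m : ℕ) {n : ℕ} (C : Submodule (ZMod m) (Fin n → ZMod m)) :
    Set (Fin n → ℝ) :=
  {x | ∃ c ∈ C, ∃ z : Fin n → ℤ,
    x = fun i => (1 / Real.sqrt m) * ((rho m (c i) : ℝ) + (m : ℝ) * (z i : ℝ))}

lemma rho_intCast {m : ℕ} [NeZero m] (a : ZMod m) : ((rho m a : ℤ) : ZMod m) = a := by
  unfold rho; split <;> push_cast <;> simp [ZMod.natCast_val, ZMod.cast_id]

lemma sq_congr (k : ℕ) (p q : ℤ) (h : (2*(k:ℤ)) ∣ p - q) :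
    (4 * (k:ℤ)) ∣ p^2 - q^2 := by
  obtain ⟨t, ht⟩ := h
  have hp : p = q + 2*k*t := by linarith
  exact ⟨t*q + k*t^2, by rw [hp]; ring⟩

/-- the Euclidean weight of `v + ⟨v,y⟩x − ⟨v,x⟩y` is congruent to
that of `v` modulo `4k`, provided `wt_E(x) ≡ wt_E(y) ≡ 0 (mod 4k)` and `⟨x,y⟩ = 0`. -/
theorem stmt3 (k n : ℕ) (hk : 1 ≤ k) (v x y : Fin n → ZMod (2 * k))
    (hx : (4 * (k : ℤ)) ∣ wtE x) (hy : (4 * (k : ℤ)) ∣ wtE y)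
    (hxy : dotP x y = 0) :
    (4 * (k : ℤ)) ∣
      (wtE (fun i => v i + dotP v y * x i - dotP v x * y i) - wtE v) := by
  haveI : NeZero (2 * k) := ⟨by omega⟩
  set a : Fin n → ℤ := fun i => rho (2*k) (v i) with ha
  set b : Fin n → ℤ := fun i => rho (2*k) (x i) with hb
  set c : Fin n → ℤ := fun i => rho (2*k) (y i) with hc
  set A : ℤ := ∑ i, a i * b i with hA
  set B : ℤ := ∑ i, a i * c i with hB
  set P : ℤ := ∑ i, b i * c i with hP
  have castA : ((A : ZMod (2*k))) = dotP v x := by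
    rw [hA]; push_cast
    exact Finset.sum_congr rfl fun i _ => by rw [ha, hb]; simp [rho_intCast]
  have castB : ((B : ZMod (2*k))) = dotP v y := by
    rw [hB]; push_cast
    exact Finset.sum_congr rfl fun i _ => by rw [ha, hc]; simp [rho_intCast]
  have castP : ((P : ZMod (2*k))) = 0 := by
    rw [hP]; push_cast
    rw [show (0 : ZMod (2*k)) = dotP x y from hxy.symm]
    exact Finset.sum_congr rfl fun i _ => by rw [hb, hc]; simp [rho_intCast]
  have hPdvd : (2*(k:ℤ)) ∣ P := by
    have := (ZMod.intCast_zmod_eq_zero_iff_dvd P (2*k)).mp castP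
    rwa [Nat.cast_mul, Nat.cast_ofNat] at this
  have key : ∀ i, (4*(k:ℤ)) ∣
      (rho (2*k) (v i + dotP v y * x i - dotP v x * y i))^2 - (a i + B * b i - A * c i)^2 := by
    intro i
    apply sq_congr
    have : (((rho (2*k) (v i + dotP v y * x i - dotP v x * y i)) - (a i + B * b i - A * c i) : ℤ)
        : ZMod (2*k)) = 0 := by
      push_cast
      rw [rho_intCast, ha, hb, hc]
      simp only [rho_intCast, castA, castB]
      ring
    have := (ZMod.intCast_zmod_eq_zero_iff_dvd _ (2*k)).mp this
    rwa [Nat.cast_mul, Nat.cast_ofNat] at this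
  have step1 : (4*(k:ℤ)) ∣
      wtE (fun i => v i + dotP v y * x i - dotP v x * y i) - ∑ i, (a i + B * b i - A * c i)^2 := by
    unfold wtE
    rw [← Finset.sum_sub_distrib]
    exact Finset.dvd_sum fun i _ => key i
  have expand : ∑ i, (a i + B * b i - A * c i)^2
      = wtE v + B^2 * wtE x + A^2 * wtE y - 2*A*B*P := by
    have h1 : ∀ i, (a i + B * b i - A * c i)^2
        = a i^2 + B^2 * b i^2 + A^2 * c i^2 + 2*B*(a i * b i) - 2*A*(a i * c i)
          - 2*A*B*(b i * c i) := fun i => by ring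
    simp only [h1]
    unfold wtE
    rw [hA, hB, hP]
    simp only [Finset.sum_add_distrib, Finset.sum_sub_distrib, ← Finset.mul_sum]
    rw [ha, hb, hc]
    ring
  rw [show wtE (fun i => v i + dotP v y * x i - dotP v x * y i) - wtE v
      = (wtE (fun i => v i + dotP v y * x i - dotP v x * y i)
          - ∑ i, (a i + B * b i - A * c i)^2)
        + (B^2 * wtE x + A^2 * wtE y - 2*A*B*P) by rw [expand]; ring]
  refine dvd_add step1 (dvd_sub (dvd_add (Dvd.dvd.mul_left hx _) (Dvd.dvd.mul_left hy _)) ?_)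
  obtain ⟨t, ht⟩ := hPdvd
  exact ⟨A*B*t, by rw [ht]; ring⟩
end

section
/- Let k ≥ 3 and n ∈ {24, 32, 40}, and let C be a Type II Z_{2k}-code of length n. Then the minimum Euclidean weight of C equals 8k (i.e., C is extremal) if and only if the Construction A lattice A_{2k}(C) has minimum norm 4. -/
open Finset

section Aux

lemma rho_zero (m : ℕ) [NeZero m] : rho m (0 : ZMod m) = 0 := by
  simp [rho, ZMod.val_zero]

lemma rho_zero_iff (m : ℕ) [NeZero m] (a : ZMod m) : rho m a = 0 ↔ a = 0 := by
  constructor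
  · intro hr
    have h := ZMod.val_lt a
    unfold rho at hr
    split_ifs at hr with h1
    · have hv : a.val = 0 := by exact_mod_cast hr
      exact (ZMod.val_eq_zero a).mp hv
    · omega
  · rintro rfl; exact rho_zero m

lemma two_rho_bounds (m : ℕ) [NeZero m] (a : ZMod m) :
    -(m:ℤ) ≤ 2 * rho m a ∧ 2 * rho m a ≤ m := by
  have h := ZMod.val_lt a
  unfold rho
  split_ifs with h1 <;> constructor <;> push_cast <;> omega

lemma rho_sq_le (m : ℕ) [NeZero m] (a : ZMod m) (z : ℤ) :
    (rho m a) ^ 2 ≤ (rho m a + (m:ℤ) * z) ^ 2 := by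
  obtain ⟨h1, h2⟩ := two_rho_bounds m a
  have hm : (0:ℤ) < m := by exact_mod_cast NeZero.pos m
  have hz1 : z ≤ z ^ 2 := by
    rcases le_or_gt z 0 with h | h
    · nlinarith [sq_nonneg z]
    · nlinarith
  have hz2 : -z ≤ z ^ 2 := by
    rcases le_or_gt 0 z with h | h
    · nlinarith [sq_nonneg z]
    · nlinarith
  nlinarith [mul_nonneg (mul_nonneg hm.le (by linarith : (0:ℤ) ≤ (m:ℤ) - 2 * rho m a))
      (by linarith : (0:ℤ) ≤ z ^ 2 - z),
    mul_nonneg (mul_nonneg hm.le (by linarith : (0:ℤ) ≤ (m:ℤ) + 2 * rho m a))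
      (by linarith : (0:ℤ) ≤ z ^ 2 + z)]

lemma sum_sq_ge (m : ℕ) [NeZero m] {n : ℕ} (c : Fin n → ZMod m) (z : Fin n → ℤ) :
    wtE c ≤ ∑ i, (rho m (c i) + (m:ℤ) * z i) ^ 2 :=
  Finset.sum_le_sum fun i _ => rho_sq_le m (c i) (z i)

lemma norm_eq (m : ℕ) [NeZero m] {n : ℕ} (c : Fin n → ZMod m) (z : Fin n → ℤ) :
    ∑ i, ((1 / Real.sqrt m) * ((rho m (c i) : ℝ) + (m:ℝ) * ((z i : ℤ) : ℝ))) ^ 2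
      = ((∑ i, (rho m (c i) + (m:ℤ) * z i) ^ 2 : ℤ) : ℝ) / m := by
  have hm : (0:ℝ) < m := by exact_mod_cast NeZero.pos m
  have hs : Real.sqrt m ^ 2 = m := Real.sq_sqrt hm.le
  push_cast
  rw [Finset.sum_div]
  refine Finset.sum_congr rfl fun i _ => ?_
  rw [mul_pow, div_pow, one_pow, hs]
  ring

lemma canon_ne_zero (m : ℕ) [NeZero m] {n : ℕ} {c : Fin n → ZMod m} (hc : c ≠ 0) :
    (fun i => (1 / Real.sqrt m) * ((rho m (c i) : ℝ) + (m:ℝ) * (((0 : Fin n → ℤ) i : ℤ) : ℝ)))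
      ≠ (0 : Fin n → ℝ) := by
  intro h0
  apply hc
  funext i
  have hi := congrFun h0 i
  have hmpos : (0:ℝ) < m := by exact_mod_cast NeZero.pos m
  have hs : (1 : ℝ) / Real.sqrt m ≠ 0 := by positivity
  simp only [Pi.zero_apply, Int.cast_zero, mul_zero, add_zero] at hi
  have h2 : (rho m (c i) : ℝ) = 0 := by
    rcases mul_eq_zero.mp hi with h | h
    · exact absurd h hs
    · exact h
  have h3 : rho m (c i) = 0 := by exact_mod_cast h2
  exact (rho_zero_iff m (c i)).mp h3

lemma key_bound (K S : ℝ) (hK : 6 ≤ K) (hS : 1 ≤ S) : 4 * K < K ^ 2 * S := by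
  nlinarith [mul_le_mul_of_nonneg_left hS (sq_nonneg K),
    mul_pos (by linarith : (0:ℝ) < K) (by linarith : (0:ℝ) < K - 4)]

end Aux

/-- for `k ≥ 3` and `n ∈ {24,32,40}`, a Type II `ZMod (2k)`-code of
length `n` is extremal (minimum Euclidean weight `8k`) iff its Construction A
lattice has minimum norm 4. -/
theorem stmt15 (k n : ℕ) (hk : 3 ≤ k) (hn : n = 24 ∨ n = 32 ∨ n = 40)
    (C : Submodule (ZMod (2 * k)) (Fin n → ZMod (2 * k)))
    (hC : IsTypeII k C) :
    IsLeast {w : ℤ | ∃ c ∈ C, c ≠ 0 ∧ wtE c = w} (8 * (k : ℤ)) ↔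
      IsLeast {t : ℝ | ∃ x ∈ constrA (2 * k) C, x ≠ 0 ∧ ∑ i, (x i) ^ 2 = t} 4 := by
  haveI : NeZero (2 * k) := ⟨by omega⟩
  have hm0 : (0:ℝ) < ((2 * k : ℕ) : ℝ) := by
    have : 0 < 2 * k := by omega
    exact_mod_cast this
  have hk6 : (6:ℝ) ≤ ((2 * k : ℕ) : ℝ) := by exact_mod_cast (by omega : 6 ≤ 2 * k)
  constructor
  · rintro ⟨⟨c0, hc0, hc0ne, hw0⟩, hlb⟩
    constructor
    · -- the canonical vector of c0 has norm 4
      refine ⟨fun i => (1 / Real.sqrt (2 * k : ℕ)) *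
          ((rho (2 * k) (c0 i) : ℝ) + ((2 * k : ℕ) : ℝ) * (((0 : Fin n → ℤ) i : ℤ) : ℝ)),
        ⟨c0, hc0, 0, rfl⟩, canon_ne_zero (2 * k) hc0ne, ?_⟩
      have hval := norm_eq (2 * k) c0 (0 : Fin n → ℤ)
      have hS : ∑ i, (rho (2 * k) (c0 i) + ((2 * k : ℕ) : ℤ) * (0 : Fin n → ℤ) i) ^ 2
          = wtE c0 := by
        simp [wtE]
      rw [hS, hw0] at hval
      rw [hval]
      rw [div_eq_iff (ne_of_gt hm0)]
      push_cast
      ring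
    · rintro t ⟨x, ⟨c, hc, z, hx⟩, hxne, ht⟩
      have hval : ∑ i, x i ^ 2
          = ((∑ i, (rho (2 * k) (c i) + ((2 * k : ℕ) : ℤ) * z i) ^ 2 : ℤ) : ℝ)
            / ((2 * k : ℕ) : ℝ) := by
        rw [hx]; exact norm_eq (2 * k) c z
      rw [← ht, hval]
      rcases eq_or_ne c 0 with rfl | hcne
      · -- zero codeword: norm is m * ∑ z², at least 6
        have hzne : z ≠ 0 := by
          intro hz0
          apply hxne
          rw [hx, hz0]
          funext i
          simp [rho_zero]
        obtain ⟨i0, hi0⟩ : ∃ i, z i ≠ 0 := by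
          by_contra h; push_neg at h; exact hzne (funext h)
        have h1 : (1:ℤ) ≤ ∑ i, (z i) ^ 2 := by
          have hone : (1:ℤ) ≤ (z i0) ^ 2 := by
            have := Int.one_le_abs hi0
            nlinarith [sq_abs (z i0), abs_nonneg (z i0)]
          calc (1:ℤ) ≤ (z i0) ^ 2 := hone
            _ ≤ ∑ i, (z i) ^ 2 :=
              Finset.single_le_sum (fun j _ => sq_nonneg (z j)) (Finset.mem_univ i0)
        have hS : ∑ i, (rho (2 * k) ((0 : Fin n → ZMod (2 * k)) i)
              + ((2 * k : ℕ) : ℤ) * z i) ^ 2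
            = ((2 * k : ℕ) : ℤ) ^ 2 * ∑ i, (z i) ^ 2 := by
          rw [Finset.mul_sum]
          refine Finset.sum_congr rfl fun i _ => ?_
          simp only [Pi.zero_apply, rho_zero, zero_add, mul_pow]
        rw [hS]
        rw [le_div_iff₀ hm0]
        have h1R : (1:ℝ) ≤ ((∑ i, (z i) ^ 2 : ℤ) : ℝ) := by exact_mod_cast h1
        have hB := key_bound (((2 * k : ℕ)) : ℝ) (((∑ i, (z i) ^ 2 : ℤ)) : ℝ) hk6 h1R
        push_cast at hB ⊢
        linarith
      · have hw : 8 * (k:ℤ) ≤ wtE c := hlb ⟨c, hc, hcne, rfl⟩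
        have hge : 8 * (k:ℤ) ≤ ∑ i, (rho (2 * k) (c i) + ((2 * k : ℕ) : ℤ) * z i) ^ 2 :=
          le_trans hw (sum_sq_ge (2 * k) c z)
        rw [le_div_iff₀ hm0]
        have hgeR : (8 * (k:ℤ) : ℝ)
            ≤ ((∑ i, (rho (2 * k) (c i) + ((2 * k : ℕ) : ℤ) * z i) ^ 2 : ℤ) : ℝ) := by
          exact_mod_cast hge
        push_cast at hgeR ⊢
        linarith
  · rintro ⟨⟨x, ⟨c, hc, z, hx⟩, hxne, hx4⟩, hlbN⟩
    have key : ∀ c' ∈ C, c' ≠ (0 : Fin n → ZMod (2 * k)) → 8 * (k:ℤ) ≤ wtE c' := by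
      intro c' hc' hc'ne
      have hmem : (∑ i, ((fun i => (1 / Real.sqrt (2 * k : ℕ)) *
            ((rho (2 * k) (c' i) : ℝ) + ((2 * k : ℕ) : ℝ)
              * (((0 : Fin n → ℤ) i : ℤ) : ℝ))) i) ^ 2)
          ∈ {t : ℝ | ∃ x ∈ constrA (2 * k) C, x ≠ 0 ∧ ∑ i, (x i) ^ 2 = t} :=
        ⟨_, ⟨c', hc', 0, rfl⟩, canon_ne_zero (2 * k) hc'ne, rfl⟩
      have h4 := hlbN hmem
      have hval : (∑ i, ((fun i => (1 / Real.sqrt (2 * k : ℕ)) *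
            ((rho (2 * k) (c' i) : ℝ) + ((2 * k : ℕ) : ℝ)
              * (((0 : Fin n → ℤ) i : ℤ) : ℝ))) i) ^ 2)
          = ((wtE c' : ℤ) : ℝ) / ((2 * k : ℕ) : ℝ) := by
        have := norm_eq (2 * k) c' (0 : Fin n → ℤ)
        have hS : ∑ i, (rho (2 * k) (c' i) + ((2 * k : ℕ) : ℤ) * (0 : Fin n → ℤ) i) ^ 2
            = wtE c' := by simp [wtE]
        rw [hS] at this
        exact this
      rw [hval, le_div_iff₀ hm0] at h4
      have : (8 * (k:ℤ) : ℝ) ≤ ((wtE c' : ℤ) : ℝ) := by push_cast at h4 ⊢; linarith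
      exact_mod_cast this
    have hval : ∑ i, x i ^ 2
        = ((∑ i, (rho (2 * k) (c i) + ((2 * k : ℕ) : ℤ) * z i) ^ 2 : ℤ) : ℝ)
          / ((2 * k : ℕ) : ℝ) := by
      rw [hx]; exact norm_eq (2 * k) c z
    have hcne : c ≠ 0 := by
      rintro rfl
      -- norm would be m * ∑ z² which cannot be 4
      have hzne : z ≠ 0 := by
        intro hz0
        apply hxne
        rw [hx, hz0]
        funext i
        simp [rho_zero]
      obtain ⟨i0, hi0⟩ : ∃ i, z i ≠ 0 := by
        by_contra h; push_neg at h; exact hzne (funext h)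
      have h1 : (1:ℤ) ≤ ∑ i, (z i) ^ 2 := by
        have hone : (1:ℤ) ≤ (z i0) ^ 2 := by
          have := Int.one_le_abs hi0
          nlinarith [sq_abs (z i0), abs_nonneg (z i0)]
        calc (1:ℤ) ≤ (z i0) ^ 2 := hone
          _ ≤ ∑ i, (z i) ^ 2 :=
            Finset.single_le_sum (fun j _ => sq_nonneg (z j)) (Finset.mem_univ i0)
      have hS : ∑ i, (rho (2 * k) ((0 : Fin n → ZMod (2 * k)) i)
            + ((2 * k : ℕ) : ℤ) * z i) ^ 2
          = ((2 * k : ℕ) : ℤ) ^ 2 * ∑ i, (z i) ^ 2 := by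
        rw [Finset.mul_sum]
        refine Finset.sum_congr rfl fun i _ => ?_
        simp only [Pi.zero_apply, rho_zero, zero_add, mul_pow]
      rw [hS] at hval
      rw [hval] at hx4
      rw [div_eq_iff (ne_of_gt hm0)] at hx4
      have h1R : (1:ℝ) ≤ ((∑ i, (z i) ^ 2 : ℤ) : ℝ) := by exact_mod_cast h1
      have hB := key_bound (((2 * k : ℕ)) : ℝ) (((∑ i, (z i) ^ 2 : ℤ)) : ℝ) hk6 h1R
      push_cast at hB hx4
      linarith
    constructor
    · -- wtE c = 8k
      refine ⟨c, hc, hcne, ?_⟩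
      have hge : 8 * (k:ℤ) ≤ wtE c := key c hc hcne
      have hle : wtE c ≤ 8 * (k:ℤ) := by
        have hge2 : wtE c ≤ ∑ i, (rho (2 * k) (c i) + ((2 * k : ℕ) : ℤ) * z i) ^ 2 :=
          sum_sq_ge (2 * k) c z
        rw [hval] at hx4
        rw [div_eq_iff (ne_of_gt hm0)] at hx4
        have hSR : ((∑ i, (rho (2 * k) (c i) + ((2 * k : ℕ) : ℤ) * z i) ^ 2 : ℤ) : ℝ)
            = 4 * ((2 * k : ℕ) : ℝ) := hx4
        have hSZ : (∑ i, (rho (2 * k) (c i) + ((2 * k : ℕ) : ℤ) * z i) ^ 2 : ℤ)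
            = 8 * (k:ℤ) := by
          have : ((∑ i, (rho (2 * k) (c i) + ((2 * k : ℕ) : ℤ) * z i) ^ 2 : ℤ) : ℝ)
              = ((8 * (k:ℤ) : ℤ) : ℝ) := by push_cast at hSR ⊢; linarith
          exact_mod_cast this
        omega
      omega
    · rintro w ⟨c', hc', hc'ne, rfl⟩
      exact key c' hc' hc'ne
end
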